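/- Let δ>0, x₀∈ℂ, and let f be holomorphic on B_δ(x₀) with 0 < M ≤ |f(x)| ≤ L for all x ∈ B_δ(x₀). Let F : B_δ(x₀) → ℂ be an antiderivative of f (i.e. F' = f on B_δ(x₀)). Set α := M²/(2M+4L) and β := M/(2M+4L) (= α/M). Then there exists a unique function G : B_{αδ}(F(x₀)) → B_{βδ}(x₀) such that F(G(y)) = y for all y ∈ B_{αδ}(F(x₀)); moreover G is holomorphic on B_{αδ}(F(x₀)) and Lipschitz continuous with Lipschitz constant 1/M. -/

import Mathlib

open Set Metric

/-- local inverse of an antiderivative, with explicit radii.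
Let `f` be holomorphic on `B_δ(x₀)` with `0 < M ≤ |f| ≤ L` there, and let `F` be an
antiderivative of `f` on `B_δ(x₀)`.  With `α := M²/(2M+4L)` and `β := M/(2M+4L)` there is a
unique `G : B_{αδ}(F(x₀)) → B_{βδ}(x₀)` with `F (G y) = y` on `B_{αδ}(F(x₀))`; moreover `G`
is holomorphic there and Lipschitz with constant `1/M`. -/
theorem stmt2 (δ M L : ℝ) (hδ : 0 < δ) (hM : 0 < M) (hML : M ≤ L) (x₀ : ℂ)
    (f F : ℂ → ℂ)
    (hf : DifferentiableOn ℂ f (Metric.ball x₀ δ))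
    (hbd : ∀ x ∈ Metric.ball x₀ δ, M ≤ ‖f x‖ ∧ ‖f x‖ ≤ L)
    (hF : ∀ x ∈ Metric.ball x₀ δ, HasDerivAt F (f x) x) :
    ∃ G : ℂ → ℂ,
      (Set.MapsTo G (Metric.ball (F x₀) (M ^ 2 / (2 * M + 4 * L) * δ))
          (Metric.ball x₀ (M / (2 * M + 4 * L) * δ)) ∧
        (∀ y ∈ Metric.ball (F x₀) (M ^ 2 / (2 * M + 4 * L) * δ), F (G y) = y) ∧
        DifferentiableOn ℂ G (Metric.ball (F x₀) (M ^ 2 / (2 * M + 4 * L) * δ)) ∧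
        LipschitzOnWith (Real.toNNReal (1 / M)) G
          (Metric.ball (F x₀) (M ^ 2 / (2 * M + 4 * L) * δ))) ∧
      ∀ G' : ℂ → ℂ,
        Set.MapsTo G' (Metric.ball (F x₀) (M ^ 2 / (2 * M + 4 * L) * δ))
            (Metric.ball x₀ (M / (2 * M + 4 * L) * δ)) →
        (∀ y ∈ Metric.ball (F x₀) (M ^ 2 / (2 * M + 4 * L) * δ), F (G' y) = y) →
        Set.EqOn G G' (Metric.ball (F x₀) (M ^ 2 / (2 * M + 4 * L) * δ)) := by
  have hL : 0 < L := lt_of_lt_of_le hM hML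
  have hP : 0 < 2 * M + 4 * L := by linarith
  have hx₀ : x₀ ∈ ball x₀ δ := mem_ball_self hδ
  set c := f x₀ with hcdef
  have hcM : M ≤ ‖c‖ := (hbd x₀ hx₀).1
  have hcpos : 0 < ‖c‖ := lt_of_lt_of_le hM hcM
  have hc0 : c ≠ 0 := by
    intro h; rw [h] at hcpos; simp at hcpos
  set D := (2 * L + M / 2) / δ with hDdef
  set r := 2 * (M / (2 * M + 4 * L)) * δ with hrdef
  set k := (M + 4 * L) / (2 * M + 4 * L) with hkdef
  have hrpos : 0 < r := by rw [hrdef]; positivity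
  have hrδ : r < δ := by
    have h1 : 2 * (M / (2 * M + 4 * L)) < 1 := by
      rw [show 2 * (M / (2 * M + 4 * L)) = 2 * M / (2 * M + 4 * L) by ring]
      exact (div_lt_one hP).2 (by linarith)
    calc r = 2 * (M / (2 * M + 4 * L)) * δ := hrdef
      _ < 1 * δ := by exact mul_lt_mul_of_pos_right h1 hδ
      _ = δ := one_mul δ
  set S := closedBall x₀ r with hSdef
  have hSb : S ⊆ ball x₀ δ := closedBall_subset_ball hrδ
  have hDpos : 0 < D := by rw [hDdef]; positivity
  have hDr : D * r = M * k := by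
    rw [hDdef, hrdef, hkdef]; field_simp; ring
  have hk1 : k < 1 := (div_lt_one hP).2 (by linarith)
  have hk0 : 0 < k := by rw [hkdef]; positivity
  have hαr : M ^ 2 / (2 * M + 4 * L) * δ = M * r / 2 := by rw [hrdef]; ring
  have hαpos : 0 < M ^ 2 / (2 * M + 4 * L) * δ := by positivity
  -- Schwarz lemma bound
  have hfc : ∀ z ∈ ball x₀ δ, ‖(f z - c)‖ ≤ D * ‖(z - x₀)‖ := by
    intro z hz
    have hmaps : MapsTo f (ball x₀ δ) (ball (f x₀) (2 * L + M / 2)) := by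
      intro w hw
      rw [mem_ball, dist_eq_norm]
      calc ‖f w - f x₀‖ ≤ ‖f w‖ + ‖f x₀‖ := norm_sub_le _ _
        _ ≤ L + L := by
            exact add_le_add (hbd w hw).2 (hbd x₀ hx₀).2
        _ < 2 * L + M / 2 := by linarith
    have h := Complex.dist_le_div_mul_dist_of_mapsTo_ball hf (hmaps.mono_right ball_subset_closedBall) hz
    rwa [Complex.dist_eq, Complex.dist_eq, ← hDdef, ← hcdef] at h
  -- Lipschitz bound for H z = F z - c z on S
  have hHlip : ∀ a ∈ S, ∀ b ∈ S,
      ‖(F b - c * b - (F a - c * a))‖ ≤ M * k * ‖(b - a)‖ := by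
    intro a ha b hb
    have hbound : ∀ z ∈ S, ‖f z - c‖ ≤ M * k := by
      intro z hz
      calc ‖f z - c‖ ≤ D * ‖(z - x₀)‖ := by
            exact hfc z (hSb hz)
        _ ≤ D * r := by
            apply mul_le_mul_of_nonneg_left _ hDpos.le
            rw [← Complex.dist_eq]
            exact mem_closedBall.1 hz
        _ = M * k := hDr
    have hd : ∀ z ∈ S, HasDerivWithinAt (fun z => F z - c * z) (f z - c) S z := by
      intro z hz
      exact ((hF z (hSb hz)).sub
        (by simpa using (hasDerivAt_id z).const_mul c)).hasDerivWithinAt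
    have h := Convex.norm_image_sub_le_of_norm_hasDerivWithin_le (C := M * k) hd hbound
      (convex_closedBall _ _) ha hb
    simpa using h
  -- Quadratic bound from the center
  have hquad : ∀ x ∈ S,
      ‖(F x - F x₀ - c * (x - x₀))‖ ≤ D / 2 * ‖(x - x₀)‖ ^ 2 := by
    intro x hxS
    set v := x - x₀ with hv
    set γ : ℝ → ℂ := fun t => x₀ + (t : ℂ) * v with hγ
    have hvr : ‖v‖ ≤ r := by
      rw [hv, ← dist_eq_norm]
      exact mem_closedBall.1 hxS
    have hγmem : ∀ t ∈ Icc (0:ℝ) 1, γ t ∈ ball x₀ δ := by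
      intro t ht
      rw [mem_ball, dist_eq_norm]
      have e : γ t - x₀ = (t : ℂ) * v := by rw [hγ]; ring
      rw [e, norm_mul, Complex.norm_real]
      calc ‖t‖ * ‖v‖ ≤ 1 * r := by
            apply mul_le_mul _ hvr (norm_nonneg _) zero_le_one
            rw [Real.norm_eq_abs, abs_le]; constructor <;> linarith [ht.1, ht.2]
        _ < δ := by rw [one_mul]; exact hrδ
    have hγd : ∀ t : ℝ, HasDerivAt γ v t := by
      intro t
      have h1 : HasDerivAt (fun t : ℝ => (t : ℂ)) 1 t := by
        simpa using (hasDerivAt_id t).ofReal_comp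
      simpa [hγ] using (h1.mul_const v).const_add x₀
    have hφd : ∀ t ∈ uIcc (0:ℝ) 1,
        HasDerivAt (fun t => F (γ t) - c * γ t) ((f (γ t) - c) * v) t := by
      intro t ht
      rw [uIcc_of_le zero_le_one] at ht
      have h2 : HasDerivAt (F ∘ γ) (v * f (γ t)) t := by
        have hfd := (hF (γ t) (hγmem t ht)).hasFDerivAt.restrictScalars ℝ
        have := hfd.comp_hasDerivAt t (hγd t)
        simpa [smul_eq_mul] using this
      have h3 : HasDerivAt (fun t : ℝ => c * γ t) (c * v) t := by
        simpa using (hγd t).const_mul c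
      have h4 : HasDerivAt (fun t : ℝ => F (γ t) - c * γ t)
          (v * f (γ t) - c * v) t := h2.sub h3
      convert h4 using 1
      ring
    have hγcont : Continuous γ := by
      rw [hγ]
      exact continuous_const.add (Complex.continuous_ofReal.mul continuous_const)
    have hcont : ContinuousOn (fun t : ℝ => (f (γ t) - c) * v) (Icc (0:ℝ) 1) := by
      apply ContinuousOn.mul _ continuousOn_const
      apply ContinuousOn.sub _ continuousOn_const
      exact hf.continuousOn.comp hγcont.continuousOn hγmem
    have hint : IntervalIntegrable (fun t : ℝ => (f (γ t) - c) * v)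
        MeasureTheory.volume 0 1 := hcont.intervalIntegrable_of_Icc zero_le_one
    have hkey : ∫ t in (0:ℝ)..1, (f (γ t) - c) * v = F x - F x₀ - c * v := by
      rw [intervalIntegral.integral_eq_sub_of_hasDerivAt hφd hint]
      have e1 : γ 1 = x := by rw [hγ, hv]; push_cast; ring
      have e0 : γ 0 = x₀ := by rw [hγ]; push_cast; ring
      rw [e1, e0, hv]; ring
    have hnorm : ‖∫ t in (0:ℝ)..1, (f (γ t) - c) * v‖ ≤ D / 2 * ‖v‖ ^ 2 := by
      have hb : ∀ᵐ t ∂(MeasureTheory.volume.restrict (Set.uIoc (0:ℝ) 1)),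
          ‖(f (γ t) - c) * v‖ ≤ D * ‖v‖ ^ 2 * t := by
        rw [MeasureTheory.ae_restrict_iff' measurableSet_uIoc]
        apply MeasureTheory.ae_of_all
        intro t ht
        rw [uIoc_of_le zero_le_one] at ht
        have htmem : t ∈ Icc (0:ℝ) 1 := ⟨ht.1.le, ht.2⟩
        have h1 : ‖f (γ t) - c‖ ≤ D * (t * ‖v‖) := by
          have h0 := hfc (γ t) (hγmem t htmem)
          have e : γ t - x₀ = (t : ℂ) * v := by rw [hγ]; ring
          rw [e, norm_mul] at h0
          calc ‖(f (γ t) - c)‖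
              ≤ D * (‖(t:ℂ)‖ * ‖v‖) := h0
            _ = D * (t * ‖v‖) := by
                rw [Complex.norm_real, Real.norm_eq_abs, abs_of_nonneg ht.1.le]
        rw [norm_mul]
        calc ‖f (γ t) - c‖ * ‖v‖ ≤ D * (t * ‖v‖) * ‖v‖ :=
              mul_le_mul_of_nonneg_right h1 (norm_nonneg _)
          _ = D * ‖v‖ ^ 2 * t := by ring
      have hgint : IntervalIntegrable (fun t : ℝ => D * ‖v‖ ^ 2 * t)
          MeasureTheory.volume 0 1 :=
        (continuous_const.mul continuous_id).intervalIntegrable 0 1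
      have h := intervalIntegral.norm_integral_le_abs_of_norm_le hb hgint
      have hval : ∫ t in (0:ℝ)..1, D * ‖v‖ ^ 2 * t = D / 2 * ‖v‖ ^ 2 := by
        rw [intervalIntegral.integral_const_mul, integral_id]; ring
      rw [hval] at h
      calc ‖∫ t in (0:ℝ)..1, (f (γ t) - c) * v‖ ≤ |D / 2 * ‖v‖ ^ 2| := h
        _ = D / 2 * ‖v‖ ^ 2 := by
            rw [abs_of_nonneg]; positivity
    rw [← hkey]
    simpa using hnorm
  -- Injectivity of F on S
  have hinj : InjOn F S := by
    intro a ha b hb hab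
    have h1 := hHlip a ha b hb
    rw [hab] at h1
    have e : F b - c * b - (F b - c * a) = c * (a - b) := by ring
    rw [e, norm_mul, norm_sub_rev a b] at h1
    have h2 : M * ‖(b - a)‖ ≤ M * k * ‖(b - a)‖ :=
      le_trans (mul_le_mul_of_nonneg_right hcM (norm_nonneg _)) h1
    have h3 : ‖(b - a)‖ = 0 := by
      by_contra h0
      have hd : 0 < ‖(b - a)‖ :=
        lt_of_le_of_ne (norm_nonneg _) (Ne.symm h0)
      have h4 := mul_lt_mul_of_pos_right (mul_lt_mul_of_pos_left hk1 hM) hd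
      rw [mul_one] at h4
      linarith
    exact (sub_eq_zero.1 (norm_eq_zero.1 h3)).symm
  -- Existence of preimages via the contraction mapping principle
  have hex : ∀ y ∈ ball (F x₀) (M ^ 2 / (2 * M + 4 * L) * δ), ∃ x, x ∈ S ∧ F x = y := by
    intro y hy
    set T : ℂ → ℂ := fun x => x - (F x - y) / c with hT
    have hTd : ∀ x ∈ S, ∀ x' ∈ S,
        ‖(T x - T x')‖ ≤ k * ‖(x - x')‖ := by
      intro x hx x' hx'
      have e : T x - T x' = -((F x - c * x - (F x' - c * x')) / c) := by
        rw [hT]; field_simp; ring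
      rw [e, norm_neg, norm_div]
      have h1 := hHlip x' hx' x hx
      calc ‖(F x - c * x - (F x' - c * x'))‖ / ‖c‖
          ≤ M * k * ‖(x - x')‖ / M :=
            div_le_div₀ (by positivity) h1 hM hcM
        _ = k * ‖(x - x')‖ := by field_simp
    have hTmaps : MapsTo T S S := by
      intro x hx
      have e : T x - x₀ = -((F x - F x₀ - c * (x - x₀)) / c) + (y - F x₀) / c := by
        rw [hT]; field_simp; ring
      rw [mem_closedBall, Complex.dist_eq, e]
      have hq := hquad x hx
      have hyb : ‖(y - F x₀)‖ ≤ M * r / 2 := by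
        rw [← Complex.dist_eq, ← hαr]
        exact (mem_ball.1 hy).le
      have hxr : ‖(x - x₀)‖ ≤ r := by
        rw [← Complex.dist_eq]; exact mem_closedBall.1 hx
      have e2 : D / 2 * r ^ 2 = M * k * r / 2 := by rw [pow_two, ← hDr]; ring
      calc ‖(-((F x - F x₀ - c * (x - x₀)) / c) + (y - F x₀) / c)‖
          ≤ ‖(-((F x - F x₀ - c * (x - x₀)) / c))‖
            + ‖((y - F x₀) / c)‖ := norm_add_le _ _
        _ = ‖(F x - F x₀ - c * (x - x₀))‖ / ‖c‖
            + ‖(y - F x₀)‖ / ‖c‖ := by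
            rw [norm_neg, norm_div, norm_div]
        _ ≤ D / 2 * r ^ 2 / M + M * r / 2 / M := by
            apply add_le_add
            · apply div_le_div₀ (by positivity) _ hM hcM
              calc ‖(F x - F x₀ - c * (x - x₀))‖
                  ≤ D / 2 * ‖(x - x₀)‖ ^ 2 := hq
                _ ≤ D / 2 * r ^ 2 := by
                    apply mul_le_mul_of_nonneg_left _ (by positivity)
                    exact pow_le_pow_left₀ (norm_nonneg _) hxr 2
            · exact div_le_div₀ (by positivity) hyb hM hcM
        _ ≤ r := by
            rw [e2, ← add_div, div_le_iff₀ hM]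
            nlinarith [mul_nonneg (mul_nonneg hM.le hrpos.le) (sub_nonneg.2 hk1.le)]
    have hK1 : (Real.toNNReal k) < 1 := Real.toNNReal_lt_one.2 hk1
    have hTlip : LipschitzOnWith (Real.toNNReal k) T S := by
      apply LipschitzOnWith.of_dist_le_mul
      intro x hx x' hx'
      rw [Complex.dist_eq, Complex.dist_eq, Real.coe_toNNReal k hk0.le]
      exact hTd x hx x' hx'
    obtain ⟨z, hzS, hzfix, -, -⟩ :=
      ContractingWith.exists_fixedPoint' (Metric.isClosed_closedBall.isComplete) hTmaps
        ⟨hK1, hTlip.mapsToRestrict hTmaps⟩ (mem_closedBall_self hrpos.le)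
        (edist_ne_top _ _)
    refine ⟨z, hzS, ?_⟩
    have h5 : z - (F z - y) / c = z := hzfix
    have h6 : (F z - y) / c = 0 := sub_eq_self.1 h5
    rcases div_eq_zero_iff.1 h6 with h7 | h7
    · exact sub_eq_zero.1 h7
    · exact absurd h7 hc0
  choose! G hGS hGF using hex
  have hFx₀mem : F x₀ ∈ ball (F x₀) (M ^ 2 / (2 * M + 4 * L) * δ) := mem_ball_self hαpos
  have hx₀S : x₀ ∈ S := mem_closedBall_self hrpos.le
  have hGFx₀ : G (F x₀) = x₀ := hinj (hGS _ hFx₀mem) hx₀S (hGF _ hFx₀mem)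
  -- crude Lipschitz bound for G, giving continuity
  have hGlip0 : ∀ y ∈ ball (F x₀) (M ^ 2 / (2 * M + 4 * L) * δ),
      ∀ y' ∈ ball (F x₀) (M ^ 2 / (2 * M + 4 * L) * δ),
      ‖G y - G y'‖ ≤ ((1 - k) * M)⁻¹ * ‖y - y'‖ := by
    intro y hy y' hy'
    have h1 := hHlip (G y') (hGS y' hy') (G y) (hGS y hy)
    rw [hGF y hy, hGF y' hy'] at h1
    have h2 : M * ‖G y - G y'‖ ≤ ‖y - y'‖ + M * k * ‖G y - G y'‖ := by
      have e : c * (G y - G y') = (y - y') - (y - c * G y - (y' - c * G y')) := by ring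
      calc M * ‖G y - G y'‖ ≤ ‖c‖ * ‖G y - G y'‖ := by
            apply mul_le_mul_of_nonneg_right _ (norm_nonneg _)
            exact hcM
        _ = ‖c * (G y - G y')‖ := (norm_mul _ _).symm
        _ = ‖(y - y') - (y - c * G y - (y' - c * G y'))‖ := by rw [e]
        _ ≤ ‖y - y'‖ + ‖y - c * G y - (y' - c * G y')‖ := norm_sub_le _ _
        _ ≤ ‖y - y'‖ + M * k * ‖G y - G y'‖ := add_le_add le_rfl h1
    have hpos : (0:ℝ) < (1 - k) * M := by nlinarith
    rw [← div_eq_inv_mul, le_div_iff₀ hpos]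
    nlinarith [norm_nonneg (G y - G y'), h2]
  have hGcont : ContinuousOn G (ball (F x₀) (M ^ 2 / (2 * M + 4 * L) * δ)) := by
    have hpos : (0:ℝ) ≤ ((1 - k) * M)⁻¹ := by
      apply inv_nonneg.2; nlinarith
    have hl : LipschitzOnWith (Real.toNNReal (((1 - k) * M)⁻¹)) G
        (ball (F x₀) (M ^ 2 / (2 * M + 4 * L) * δ)) := by
      apply LipschitzOnWith.of_dist_le_mul
      intro y hy y' hy'
      rw [dist_eq_norm, dist_eq_norm, Real.coe_toNNReal _ hpos]
      exact hGlip0 y hy y' hy'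
    exact hl.continuousOn
  have hGderiv : ∀ y ∈ ball (F x₀) (M ^ 2 / (2 * M + 4 * L) * δ),
      HasDerivAt G (f (G y))⁻¹ y := by
    intro y hy
    have hopen : IsOpen (ball (F x₀) (M ^ 2 / (2 * M + 4 * L) * δ)) := isOpen_ball
    apply HasDerivAt.of_local_left_inverse
    · exact hGcont.continuousAt (hopen.mem_nhds hy)
    · exact hF (G y) (hSb (hGS y hy))
    · intro h0
      have hb1 := (hbd (G y) (hSb (hGS y hy))).1
      rw [h0] at hb1; simp at hb1; linarith
    · exact Filter.eventually_of_mem (hopen.mem_nhds hy) (fun x hx => hGF x hx)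
  have hGlip : LipschitzOnWith (Real.toNNReal (1 / M)) G
      (ball (F x₀) (M ^ 2 / (2 * M + 4 * L) * δ)) := by
    apply Convex.lipschitzOnWith_of_nnnorm_hasDerivWithin_le
      (f' := fun y => (f (G y))⁻¹) (convex_ball _ _)
      (fun y hy => (hGderiv y hy).hasDerivWithinAt)
    intro y hy
    rw [← NNReal.coe_le_coe, coe_nnnorm, Real.coe_toNNReal _ (by positivity)]
    rw [norm_inv, one_div]
    exact inv_anti₀ hM (hbd (G y) (hSb (hGS y hy))).1
  have hGmaps : MapsTo G (ball (F x₀) (M ^ 2 / (2 * M + 4 * L) * δ))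
      (ball x₀ (M / (2 * M + 4 * L) * δ)) := by
    intro y hy
    rw [mem_ball]
    have h1 := hGlip.dist_le_mul y hy (F x₀) hFx₀mem
    rw [hGFx₀, Real.coe_toNNReal _ (by positivity : (0:ℝ) ≤ 1 / M)] at h1
    have h2 : dist y (F x₀) < M ^ 2 / (2 * M + 4 * L) * δ := mem_ball.1 hy
    calc dist (G y) x₀ ≤ 1 / M * dist y (F x₀) := h1
      _ < 1 / M * (M ^ 2 / (2 * M + 4 * L) * δ) := by
          exact mul_lt_mul_of_pos_left h2 (by positivity)
      _ = M / (2 * M + 4 * L) * δ := by field_simp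
  refine ⟨G, ⟨hGmaps, hGF,
    fun y hy => ((hGderiv y hy).differentiableAt).differentiableWithinAt, hGlip⟩, ?_⟩
  intro G' hmap' hfix' y hy
  have hsub : ball x₀ (M / (2 * M + 4 * L) * δ) ⊆ S := by
    intro w hw
    rw [hSdef, mem_closedBall]
    have h2 := mem_ball.1 hw
    have hq : (0:ℝ) ≤ M / (2 * M + 4 * L) * δ := by positivity
    have hle : M / (2 * M + 4 * L) * δ ≤ r := by rw [hrdef]; linarith
    linarith
  exact hinj (hGS y hy) (hsub (hmap' hy)) ((hGF y hy).trans (hfix' y hy).symm)
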